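/- arXiv:1001.4202 — 2 statements merged into one kernel-verified Lean document; each statement's English description precedes it below -/
import Mathlib

section
/- Let q₁ = (1,1,1,1,1,1,0,0,0,0,0,0), q₂ = (0,1,1,1,1,1,1,0,0,0,0,0), q₃ = (1,0,1,1,1,1,0,1,0,0,0,0), q₄ = (1,1,0,1,1,1,0,0,1,0,0,0), q₅ = (1,1,1,0,1,1,0,0,0,1,0,0), q₆ = (1,1,1,1,0,1,0,0,0,0,1,0), q₇ = (1,1,1,1,1,0,0,0,0,0,0,1) be elements of ℤ¹². Then the subgroup of ℤ¹² generated by q₁,…,q₇ is exactly the set of vectors v = (n₁,…,n₆,n′₁,…,n′₆) ∈ ℤ¹² such that nᵢ + n′ᵢ = nⱼ + n′ⱼ for all i, j ∈ {1,…,6}. -/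
/-- The seven vectors `q₁, …, q₇` of `ℤ¹²` from the pinwheel gap-labeling computation. -/
def q1 : Fin 12 → ℤ := ![1,1,1,1,1,1,0,0,0,0,0,0]
def q2 : Fin 12 → ℤ := ![0,1,1,1,1,1,1,0,0,0,0,0]
def q3 : Fin 12 → ℤ := ![1,0,1,1,1,1,0,1,0,0,0,0]
def q4 : Fin 12 → ℤ := ![1,1,0,1,1,1,0,0,1,0,0,0]
def q5 : Fin 12 → ℤ := ![1,1,1,0,1,1,0,0,0,1,0,0]
def q6 : Fin 12 → ℤ := ![1,1,1,1,0,1,0,0,0,0,1,0]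
def q7 : Fin 12 → ℤ := ![1,1,1,1,1,0,0,0,0,0,0,1]

/-- The subgroup of `ℤ¹²` generated by `q₁, …, q₇` is exactly the set of vectors
`v = (n₁,…,n₆,n′₁,…,n′₆)` such that `nᵢ + n′ᵢ = nⱼ + n′ⱼ` for all `i, j ∈ {1,…,6}`. -/
theorem kernel_connecting_map (v : Fin 12 → ℤ) :
    v ∈ AddSubgroup.closure ({q1, q2, q3, q4, q5, q6, q7} : Set (Fin 12 → ℤ)) ↔
      ∀ i j : Fin 6,
        v (Fin.castAdd 6 i) + v (Fin.natAdd 6 i) =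
          v (Fin.castAdd 6 j) + v (Fin.natAdd 6 j) := by
  constructor
  · intro hv
    induction hv using AddSubgroup.closure_induction with
    | mem x hx =>
      rcases hx with h|h|h|h|h|h|h <;> subst h <;> intro i j <;>
        fin_cases i <;> fin_cases j <;> decide
    | zero => intro i j; simp
    | add x y _ _ hx hy =>
      intro i j
      have := hx i j
      have := hy i j
      simp only [Pi.add_apply]
      omega
    | neg x _ hx =>
      intro i j
      have := hx i j
      simp only [Pi.neg_apply]
      omega
  · intro hcond
    have h1 : v 1 + v 7 = v 0 + v 6 := hcond 1 0
    have h2 : v 2 + v 8 = v 0 + v 6 := hcond 2 0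
    have h3 : v 3 + v 9 = v 0 + v 6 := hcond 3 0
    have h4 : v 4 + v 10 = v 0 + v 6 := hcond 4 0
    have h5 : v 5 + v 11 = v 0 + v 6 := hcond 5 0
    have key : v = (v 0 + v 6 - (v 6 + v 7 + v 8 + v 9 + v 10 + v 11)) • q1 +
        (v 6 • q2 + (v 7 • q3 + (v 8 • q4 + (v 9 • q5 + (v 10 • q6 + v 11 • q7))))) := by
      funext k
      fin_cases k <;>
        simp only [q1, q2, q3, q4, q5, q6, q7, Pi.add_apply, Pi.smul_apply, smul_eq_mul,
          Matrix.cons_val_succ', Fin.mk_zero, Matrix.cons_val_zero, Matrix.cons_val_one,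
          Matrix.head_cons] <;> (try simp) <;> omega
    rw [key]
    have mem : ∀ x ∈ ({q1, q2, q3, q4, q5, q6, q7} : Set (Fin 12 → ℤ)),
        x ∈ AddSubgroup.closure ({q1, q2, q3, q4, q5, q6, q7} : Set (Fin 12 → ℤ)) :=
      fun x hx => AddSubgroup.subset_closure hx
    refine AddSubgroup.add_mem _ (AddSubgroup.zsmul_mem _ (mem q1 (by simp)) _) ?_
    refine AddSubgroup.add_mem _ (AddSubgroup.zsmul_mem _ (mem q2 (by simp)) _) ?_
    refine AddSubgroup.add_mem _ (AddSubgroup.zsmul_mem _ (mem q3 (by simp)) _) ?_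
    refine AddSubgroup.add_mem _ (AddSubgroup.zsmul_mem _ (mem q4 (by simp)) _) ?_
    refine AddSubgroup.add_mem _ (AddSubgroup.zsmul_mem _ (mem q5 (by simp)) _) ?_
    exact AddSubgroup.add_mem _ (AddSubgroup.zsmul_mem _ (mem q6 (by simp)) _)
      (AddSubgroup.zsmul_mem _ (mem q7 (by simp)) _)
end

section
/- Let G be a locally compact Hausdorff unimodular topological group with Haar measure λ, let Ω be a compact Hausdorff space with a continuous right action of G, and let μ be a G-invariant Borel probability measure on Ω. For a continuous compactly supported function f : Ω × G → ℂ define f*(ω, x) := conj(f(ω·x, x⁻¹)), the convolution (f ∗ g)(ω, x) := ∫_G f(ω, h) · g(ω·h, h⁻¹x) dλ(h), and τ(f) := ∫_Ω f(ω, e) dμ(ω). Then τ(f ∗ f*) = ∫_Ω ∫_G |f(ω, h)|² dλ(h) dμ(ω); in particular τ(f ∗ f*) ≥ 0. -/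
open MeasureTheory

private theorem my_integral_ofReal {α : Type*} [MeasurableSpace α] {ν : MeasureTheory.Measure α}
    (g : α → ℝ) : ∫ a, ((g a : ℝ) : ℂ) ∂ν = ((∫ a, g a ∂ν : ℝ) : ℂ) :=
  Complex.ofRealLI.integral_comp_comm g

/-- Positivity of the trace `τ^μ` on `C_c(Ω × G)`:
with `f*(ω, x) = conj(f(ω·x, x⁻¹))`, `(f ∗ g)(ω, x) = ∫_G f(ω, h) g(ω·h, h⁻¹x) dλ(h)`
and `τ(f) = ∫_Ω f(ω, e) dμ(ω)`, one has
`τ(f ∗ f*) = ∫_Ω ∫_G |f(ω, h)|² dλ(h) dμ(ω)`; in particular `τ(f ∗ f*) ≥ 0`. -/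
theorem trace_positive
    (G : Type*) [Group G] [TopologicalSpace G] [IsTopologicalGroup G]
    [LocallyCompactSpace G] [T2Space G] [MeasurableSpace G] [BorelSpace G]
    (lam : Measure G) [lam.IsHaarMeasure] [lam.IsMulRightInvariant]
    (Ω : Type*) [TopologicalSpace Ω] [CompactSpace Ω] [T2Space Ω]
    [MeasurableSpace Ω] [BorelSpace Ω]
    (act : Ω → G → Ω)
    (hact_one : ∀ ω, act ω 1 = ω)
    (hact_mul : ∀ ω (g h : G), act (act ω g) h = act ω (g * h))
    (hact_cont : Continuous fun p : Ω × G => act p.1 p.2)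
    (μ : Measure Ω) [IsProbabilityMeasure μ]
    (hμ : ∀ g : G, MeasurePreserving (fun ω => act ω g) μ μ)
    (f : Ω × G → ℂ) (hf : Continuous f) (hf' : HasCompactSupport f)
    (fstar : Ω × G → ℂ)
    (hfstar : ∀ ω (x : G), fstar (ω, x) = (starRingEnd ℂ) (f (act ω x, x⁻¹))) :
    (∫ ω, (∫ h, f (ω, h) * fstar (act ω h, h⁻¹ * 1) ∂lam) ∂μ) =
        ((∫ ω, (∫ h, ‖f (ω, h)‖ ^ 2 ∂lam) ∂μ : ℝ) : ℂ) ∧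
      0 ≤ (∫ ω, (∫ h, ‖f (ω, h)‖ ^ 2 ∂lam) ∂μ : ℝ) := by
  have key : ∀ ω (h : G), f (ω, h) * fstar (act ω h, h⁻¹ * 1) =
      ((‖f (ω, h)‖ ^ 2 : ℝ) : ℂ) := by
    intro ω h
    rw [hfstar, mul_one, hact_mul, mul_inv_cancel, hact_one, inv_inv,
      Complex.mul_conj', Complex.ofReal_pow]
  constructor
  · simp only [key]
    rw [← my_integral_ofReal]
    exact integral_congr_ae (Filter.Eventually.of_forall fun ω => my_integral_ofReal fun h => ‖f (ω, h)‖ ^ 2)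
  · exact integral_nonneg fun ω => integral_nonneg fun h => by positivity
end
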